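/- Let χ be a regular cardinal with wellordering ≤_χ of H(χ), let X be a countable elementary substructure of (H(χ), ∈, ≤_χ), and let η be an ordinal in X. If z is a subset of η such that every finite subset of z lies in D^X_η, then the Skolem hull Y of X ∪ z in (H(χ), ∈, ≤_χ) satisfies Y ∩ ω₁ = X ∩ ω₁. -/

import Mathlib

open ZFSet FirstOrder

namespace P746

/-! ## First-order language with membership and a wellordering predicate -/

/-- The language with two binary relation symbols: `∈` and a wellordering `<*`. -/
def L : FirstOrder.Language where
  Functions := fun _ => Empty
  Relations := fun n => match n with
    | 2 => Fin 2
    | _ => Empty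

/-- The `L`-structure on (the members of) a ZF-set `M`, interpreting the first relation
as membership and the second as a given relation `r`. -/
def mStruc (M : ZFSet) (r : ZFSet → ZFSet → Prop) : L.Structure M.toSet where
  funMap := fun f _ => f.elim
  RelMap := fun {n} => match n with
    | 0 => fun R _ => R.elim
    | 1 => fun R _ => R.elim
    | 2 => fun R v => @ite _ (R = (0 : Fin 2)) (decEq (α := Fin 2) R 0) ((v 0 : ZFSet) ∈ (v 1 : ZFSet)) (r (v 0) (v 1))
    | (_+3) => fun R _ => R.elim

/-- `X` is an elementary substructure of `(M, ∈, r)`: `X ⊆ M` and every first-order formula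
with parameters from `X` holds in `X` iff it holds in `M`. -/
def ElemSub (M : ZFSet) (r : ZFSet → ZFSet → Prop) (X : ZFSet) : Prop :=
  ∃ h : X ⊆ M,
    ∀ (n : ℕ) (φ : L.Formula (Fin n)) (v : Fin n → X.toSet),
      (letI := mStruc M r
       φ.Realize (fun i => (⟨(v i : ZFSet), h (v i).2⟩ : M.toSet))) ↔
      (letI := mStruc X r; φ.Realize v)

/-- `r` is a wellordering of the members of `S`. -/
def WOn (S : ZFSet) (r : ZFSet → ZFSet → Prop) : Prop :=
  IsWellOrder S.toSet (Subrel r S.toSet)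

/-! ## Basic set-theoretic notions inside `ZFSet` -/

/-- `x` is a (von Neumann) ordinal: a transitive set of transitive sets. -/
def IsOrd (x : ZFSet) : Prop :=
  x.IsTransitive ∧ ∀ y ∈ x.toSet, ZFSet.IsTransitive y

/-- `w` is the first uncountable ordinal `ω₁`. -/
def IsOmega1 (w : ZFSet) : Prop :=
  IsOrd w ∧ ¬ w.toSet.Countable ∧ ∀ y ∈ w.toSet, y.toSet.Countable

/-- The set `[x]^{<ω}` of finite subsets of `x`. -/
noncomputable def finPow (x : ZFSet) : ZFSet :=
  ZFSet.sep (fun a => a.toSet.Finite) x.powerset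

/-- The set `[x]^n` of subsets of `x` of size `n`. -/
noncomputable def finPowCard (x : ZFSet) (n : ℕ) : ZFSet :=
  ZFSet.sep (fun a => a.toSet.Finite ∧ a.toSet.ncard = n) x.powerset

/-- `D^X_η`: the set of finite `a ⊆ η` such that `f(a) ∈ X` for every
`f : [η]^{|a|} → ω₁` belonging to `X` (`w` stands for `ω₁`). -/
def Dset (w X η : ZFSet) : Set ZFSet :=
  {a | a ∈ finPow η ∧ ∀ f ∈ X.toSet, ZFSet.IsFunc (finPowCard η a.toSet.ncard) w f →
    ∀ v : ZFSet, ZFSet.pair a v ∈ f → v ∈ X}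

/-- The Skolem hull of `X ∪ z` in `M` (with functions on `[η]^{<ω}`):
`X` together with all values `f(a)` for `f : [η]^{<ω} → M` in `X` and finite `a ⊆ z`. -/
def SkHull (M η X z : ZFSet) : Set ZFSet :=
  X.toSet ∪ {y | ∃ f ∈ X.toSet, ZFSet.IsFunc (finPow η) M f ∧
    ∃ a : ZFSet, a ∈ finPow η ∧ a ⊆ z ∧ ZFSet.pair a y ∈ f}

/-- `x` is hereditarily of cardinality less than `κ`. -/
def HerLt (κ : Cardinal) (x : ZFSet) : Prop :=
  ZFSet.mem_wf.fix (C := fun _ => Prop)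
    (fun y ih => Cardinal.mk y.toSet < κ ∧ ∀ z, ∀ h : z ∈ y, ih z h) x

/-- `H` is the collection `H(κ)` of sets hereditarily of cardinality `< κ`. -/
def IsHCard (κ : Cardinal) (H : ZFSet) : Prop :=
  ∀ x : ZFSet, x ∈ H ↔ HerLt κ x

/-! ## Clubs, stationarity and canonical functions on `ω₁` -/

noncomputable def omega1 : Ordinal.{0} := (Cardinal.aleph 1).ord
noncomputable def omega2 : Ordinal.{0} := (Cardinal.aleph 2).ord

/-- `C` is a club (closed unbounded) subset of `ω₁`. -/
def IsClub (C : Set Ordinal.{0}) : Prop :=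
  C ⊆ Set.Iio omega1 ∧
  (∀ o, o < omega1 → (o ≠ 0 ∧ ∀ a < o, Order.succ a < o) → (∀ b, b < o → ∃ c ∈ C, b ≤ c ∧ c < o) → o ∈ C) ∧
  (∀ b, b < omega1 → ∃ c ∈ C, b < c ∧ c < omega1)

/-- `S` is a stationary subset of `ω₁`. -/
def IsStat (S : Set Ordinal.{0}) : Prop :=
  ∀ C, IsClub C → (S ∩ C).Nonempty

/-- `f ≤ g` on a club. -/
def BddOnClub (f g : Ordinal.{0} → Ordinal.{0}) : Prop :=
  ∃ C, IsClub C ∧ ∀ α ∈ C, f α ≤ g α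

/-- `f < g` on a club. -/
def LtOnClub (f g : Ordinal.{0} → Ordinal.{0}) : Prop :=
  ∃ C, IsClub C ∧ ∀ α ∈ C, f α < g α

/-- `f` is a canonical function for `γ`: it is above every canonical function for every `β < γ`
(mod clubs), and minimally so.  (This is the standard recursive characterization of the
statement that the empty condition in `P(ω₁)/NS_{ω₁}` forces `j(f)(ω₁^V) = γ`.) -/
def Canonical : Ordinal.{0} → (Ordinal.{0} → Ordinal.{0}) → Prop :=
  Ordinal.lt_wf.fix (C := fun _ => (Ordinal.{0} → Ordinal.{0}) → Prop)
    (fun γ ih f =>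
      (∀ β, ∀ hβ : β < γ, ∀ g, ih β hβ g → LtOnClub g f) ∧
      ∀ h : Ordinal.{0} → Ordinal.{0},
        (∀ β, ∀ hβ : β < γ, ∀ g, ih β hβ g → LtOnClub g h) → BddOnClub f h)

/-- Every `f : ω₁ → ω₁` is bounded on a club by a canonical function for some `γ < ω₂`. -/
def Bounding : Prop :=
  ∀ f : Ordinal.{0} → Ordinal.{0}, (∀ α, α < omega1 → f α < omega1) →
    ∃ γ, γ < omega2 ∧ ∃ g, Canonical γ g ∧ BddOnClub f g

/-- `o` is the order type of the set of ordinals `s`: there is a strictly increasing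
enumeration of `s` indexed by the ordinals below `o`. -/
def IsOtypOf (o : Ordinal.{0}) (s : Set Ordinal.{0}) : Prop :=
  ∃ e : Ordinal.{0} → Ordinal.{0},
    (∀ i j, i < j → j < o → e i < e j) ∧
    (∀ i, i < o → e i ∈ s) ∧ ∀ x ∈ s, ∃ i, i < o ∧ e i = x

/-! ## Trees on `ω × ω` and `ω × Ord` (as sets of pairs of lists) -/

def IsTreeN (S : Set (List ℕ × List ℕ)) : Prop :=
  ∀ p ∈ S, p.1.length = p.2.length ∧ ∀ n : ℕ, (p.1.take n, p.2.take n) ∈ S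

def IsTreeO (T : Set (List ℕ × List Ordinal.{0})) : Prop :=
  ∀ p ∈ T, p.1.length = p.2.length ∧ ∀ n : ℕ, (p.1.take n, p.2.take n) ∈ T

/-- Projection of a tree on `ω × ω`. -/
def projN (S : Set (List ℕ × List ℕ)) : Set (ℕ → ℕ) :=
  {x | ∃ y : ℕ → ℕ, ∀ n : ℕ,
    (List.ofFn (fun i : Fin n => x i), List.ofFn (fun i : Fin n => y i)) ∈ S}

/-- Projection of a tree on `ω × Ord`. -/
def projO (T : Set (List ℕ × List Ordinal.{0})) : Set (ℕ → ℕ) :=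
  {x | ∃ y : ℕ → Ordinal.{0}, ∀ n : ℕ,
    (List.ofFn (fun i : Fin n => x i), List.ofFn (fun i : Fin n => y i)) ∈ T}

/-- Projection of the restricted tree `T ↾ (ω × α)`. -/
def projOBelow (T : Set (List ℕ × List Ordinal.{0})) (α : Ordinal.{0}) : Set (ℕ → ℕ) :=
  {x | ∃ y : ℕ → Ordinal.{0}, (∀ i, y i < α) ∧ ∀ n : ℕ,
    (List.ofFn (fun i : Fin n => x i), List.ofFn (fun i : Fin n => y i)) ∈ T}

/-! ## Names, evaluation, and generic extensions -/

open Classical in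
/-- Evaluation of a `P`-name `τ` by a filter `G`:
`val G τ = { val G σ : ∃ p ∈ G, (σ, p) ∈ τ }`, by recursion on rank. -/
noncomputable def val (G : ZFSet) : ZFSet → ZFSet :=
  WellFounded.fix (InvImage.wf ZFSet.rank Ordinal.lt_wf)
    (fun τ ih =>
      ZFSet.sUnion <| ZFSet.sep
        (fun y => ∃ z ∈ τ.toSet,
          if h : ∃ σ, ZFSet.rank σ < ZFSet.rank τ ∧ ∃ p ∈ G.toSet, z = ZFSet.pair σ p
          then y = {ih h.choose h.choose_spec.1}
          else y = ∅)
        (ZFSet.powerset (ZFSet.sUnion (ZFSet.sUnion (ZFSet.sUnion τ)))))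

/-- The universe is a generic extension `V[G]` of the transitive class `V` by the
partial order `(P, ≤)` (with `le` the set of pairs `(p,q)` with `p ≤ q`), `G ⊆ P`
a filter meeting every dense subset of `P` lying in `V`, and every set being the
value of a `P`-name in `V`. -/
def IsGenericExt (V : Set ZFSet) (P le G : ZFSet) : Prop :=
  (∀ x ∈ V, ∀ y, y ∈ x → y ∈ V) ∧ P ∈ V ∧ le ∈ V ∧
  (∀ p, p ∈ P → ZFSet.pair p p ∈ le) ∧
  (∀ p q z, ZFSet.pair p q ∈ le → ZFSet.pair q z ∈ le → ZFSet.pair p z ∈ le) ∧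
  (∀ p q, ZFSet.pair p q ∈ le → p ∈ P ∧ q ∈ P) ∧
  G ⊆ P ∧ G ≠ ∅ ∧
  (∀ p q, p ∈ G → q ∈ G → ∃ r, r ∈ G ∧ ZFSet.pair r p ∈ le ∧ ZFSet.pair r q ∈ le) ∧
  (∀ p q, p ∈ G → q ∈ P → ZFSet.pair p q ∈ le → q ∈ G) ∧
  (∀ D, D ∈ V → D ⊆ P → (∀ p, p ∈ P → ∃ q, q ∈ D ∧ ZFSet.pair q p ∈ le) →
    ∃ q, q ∈ G ∧ q ∈ D) ∧
  (∀ x : ZFSet, ∃ τ, τ ∈ V ∧ x = val G τ)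

/-- In the generic extension, the forcing added no new `ω`-sequences of ordinals;
i.e. `P` is `(ω, ∞)`-distributive. -/
def Distributive (V : Set ZFSet) : Prop :=
  ∀ f o : ZFSet, (o.IsTransitive ∧ ∀ y ∈ o.toSet, ZFSet.IsTransitive y) →
    ZFSet.IsFunc ZFSet.omega o f → f ∈ V

/-! ## Ultrafilters and completeness -/

/-- `U` is an ultrafilter on the set `S`. -/
def IsUltraOn (S U : ZFSet) : Prop :=
  U ⊆ S.powerset ∧ S ∈ U ∧ (∅ : ZFSet) ∉ U ∧
  (∀ A B, A ∈ U → A ⊆ B → B ⊆ S → B ∈ U) ∧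
  (∀ A B, A ∈ U → B ∈ U → A ∩ B ∈ U) ∧
  (∀ A, A ⊆ S → (A ∈ U ∨ ZFSet.sep (fun x => x ∉ A) S ∈ U))

/-- `U` is `γ`-complete with respect to families of members of `U` lying in `W`. -/
def CompleteOn (W : Set ZFSet) (γ : Cardinal.{1}) (S U : ZFSet) : Prop :=
  ∀ F, F ∈ W → F ≠ ∅ → F ⊆ U → Cardinal.mk F.toSet < γ →
    ZFSet.sep (fun x => ∀ A ∈ F.toSet, x ∈ A) S ∈ U

/-! ## Internal finite sequences, trees and homogeneity -/

/-- The set `κ^{<ω}` of finite sequences from `κ` (functions `n → κ`, `n < ω`). -/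
noncomputable def seqs (κ : ZFSet) : ZFSet :=
  ZFSet.sep (fun f => ∃ n, n ∈ ZFSet.omega ∧ ZFSet.IsFunc n κ f)
    (((κ ∪ ZFSet.omega).powerset.powerset).powerset)

/-- The set of functions `a → b` as a ZF-set. -/
noncomputable def funsZ (a b : ZFSet) : ZFSet :=
  ZFSet.sep (fun f => ZFSet.IsFunc a b f) (((a ∪ b).powerset.powerset).powerset)

/-- Restriction of a (set-)function `f` to `m`. -/
noncomputable def restr (f m : ZFSet) : ZFSet :=
  ZFSet.sep (fun p => ∃ i v, i ∈ m ∧ p = ZFSet.pair i v) f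

/-- `T` is a tree on `ω × κ`: a set of pairs of finite sequences of equal length,
closed under restriction. -/
def IsTreeZ (κ T : ZFSet) : Prop :=
  ∀ z, z ∈ T → ∃ n s t, n ∈ ZFSet.omega ∧ ZFSet.IsFunc n ZFSet.omega s ∧
    ZFSet.IsFunc n κ t ∧ z = ZFSet.pair s t ∧
    ∀ m, m ∈ n → ZFSet.pair (restr s m) (restr t m) ∈ T

/-- `x ∈ p[T]`, computed in `W`: there is a branch witness `y ∈ W`. -/
def inProjZ (W : Set ZFSet) (κ T x : ZFSet) : Prop :=
  ∃ y, y ∈ W ∧ ZFSet.IsFunc ZFSet.omega κ y ∧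
    ∀ n, n ∈ ZFSet.omega → ZFSet.pair (restr x n) (restr y n) ∈ T

/-- `x ∈ p[T ↾ (ω × A)]` where the branch takes values satisfying `Q`. -/
def inProjVal (κ T x : ZFSet) (Q : ZFSet → Prop) : Prop :=
  ∃ y, ZFSet.IsFunc ZFSet.omega κ y ∧ (∀ i v, ZFSet.pair i v ∈ y → Q v) ∧
    ∀ n, n ∈ ZFSet.omega → ZFSet.pair (restr x n) (restr y n) ∈ T

/-- The tower `⟨π(x ↾ k) : k < ω⟩` is countably complete, relativized to `W`. -/
def CCTower (W : Set ZFSet) (κ π x : ZFSet) : Prop :=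
  ∀ Af, Af ∈ W → ZFSet.IsFunc ZFSet.omega ((seqs κ).powerset) Af →
    (∀ n U a, n ∈ ZFSet.omega → ZFSet.pair (restr x n) U ∈ π →
      ZFSet.pair n a ∈ Af → a ∈ U) →
    ∃ y, y ∈ W ∧ ZFSet.IsFunc ZFSet.omega κ y ∧
      ∀ n a, n ∈ ZFSet.omega → ZFSet.pair n a ∈ Af → restr y n ∈ a

/-- `(T, π)` is a `γ`-homogeneous tree system on `ω × κ`, relativized to the class `W`. -/
def HomSys (W : Set ZFSet) (γ : Cardinal.{1}) (κ T π : ZFSet) : Prop :=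
  IsTreeZ κ T ∧
  (∀ z, z ∈ π → ∃ n s U, n ∈ ZFSet.omega ∧ ZFSet.IsFunc n ZFSet.omega s ∧
    z = ZFSet.pair s U ∧ IsUltraOn (funsZ n κ) U ∧ CompleteOn W γ (funsZ n κ) U ∧
    ZFSet.sep (fun t => ZFSet.pair s t ∈ T) (funsZ n κ) ∈ U) ∧
  (∀ s U U', ZFSet.pair s U ∈ π → ZFSet.pair s U' ∈ π → U = U') ∧
  (∀ x, x ∈ W → ZFSet.IsFunc ZFSet.omega ZFSet.omega x →
    (inProjZ W κ T x ↔
      ((∀ n, n ∈ ZFSet.omega → ∃ U, ZFSet.pair (restr x n) U ∈ π) ∧ CCTower W κ π x)))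

/-- `A` is a `γ`-homogeneously Suslin set of reals, in the sense of the class `W`. -/
def HomSuslinIn (W : Set ZFSet) (γ : Cardinal.{1}) (A : ZFSet) : Prop :=
  A ⊆ funsZ ZFSet.omega ZFSet.omega ∧
  ∃ κ T π, κ ∈ W ∧ T ∈ W ∧ π ∈ W ∧
    (κ.IsTransitive ∧ ∀ y ∈ κ.toSet, ZFSet.IsTransitive y) ∧
    HomSys W γ κ T π ∧
    ∀ x, ZFSet.IsFunc ZFSet.omega ZFSet.omega x → (x ∈ A ↔ inProjZ W κ T x)


/-! ## Additional notions -/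

/-- `γ` is a regular (limit) cardinal, as a ZF-set ordinal: the range of any function
from a smaller ordinal into `γ` is bounded. -/
def IsRegOrd (γ : ZFSet) : Prop :=
  IsOrd γ ∧ (∀ o ∈ γ.toSet, ∃ o' ∈ γ.toSet, o ∈ o') ∧
  ∀ b f, b ∈ γ → ZFSet.IsFunc b γ f → ∃ o ∈ γ.toSet, ∀ x v, ZFSet.pair x v ∈ f → v ∈ o

/-- `Y` is a minimal `(η, λ)`-extension of `X` (inside the model `M` with wellordering `r`):
`Y ≺ M`, `Y ∩ η = X ∩ η`, and `Y` is the Skolem hull of `X ∪ A` for some `A ⊆ λ`. -/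
def IsMinExt (M : ZFSet) (r : ZFSet → ZFSet → Prop) (η lam X Y : ZFSet) : Prop :=
  ElemSub M r Y ∧ Y ∩ η = X ∩ η ∧ ∃ A : ZFSet, A ⊆ lam ∧ Y.toSet = SkHull M lam X A

/-- `U` is a normal measure on the (measurable) cardinal `λ`. -/
def IsNormalMeasure (lam U : ZFSet) : Prop :=
  IsOrd lam ∧ IsUltraOn lam U ∧
  CompleteOn Set.univ (Cardinal.mk lam.toSet) lam U ∧
  (∀ x, x ∈ lam → ({x} : ZFSet) ∉ U) ∧
  ∀ f A, A ∈ U → ZFSet.IsFunc lam lam f →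
    (∀ x v, x ∈ A → ZFSet.pair x v ∈ f → (v ∈ x ∨ x = ∅)) →
    ∃ B c, B ∈ U ∧ ∀ x, x ∈ B → ZFSet.pair x c ∈ f

/-- `g` is the `ξ`-th ordinal of `M` (counting from `0`): the ordinals of `M` below `g`
have order type `ξ`. -/
def NthOrdOf (M : ZFSet) (ξ : Ordinal.{0}) (g : ZFSet) : Prop :=
  IsOrd g ∧ g ∈ M ∧
  IsOtypOf ξ (ZFSet.rank '' {x : ZFSet | x ∈ M.toSet ∧ IsOrd x ∧ x ∈ g})

/-- The relation `≤_o` on a tree `T` on `ω × ω₁`: one sequence extends the other, and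
the first coordinate of the last element of the longer one codes that the length of the
first is below the length of the second in the coded ordering.  (`decode k m n` means:
the value `k` codes `m` before `n`.) -/
def leO (T : Set (List ℕ × List Ordinal.{0})) (decode : ℕ → ℕ → ℕ → Prop)
    (p q : List ℕ × List Ordinal.{0}) : Prop :=
  p ∈ T ∧ q ∈ T ∧
  ((p.1 <+: q.1 ∧ p.2 <+: q.2 ∧ p.1.length < q.1.length ∧
      decode (q.1.getD (q.1.length - 1) 0) p.1.length q.1.length) ∨
   (q.1 <+: p.1 ∧ q.2 <+: p.2 ∧ q.1.length < p.1.length ∧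
      decode (p.1.getD (p.1.length - 1) 0) p.1.length q.1.length))

/-- The binary relation on `ω` coded by `x : ω → ω`:  comparisons of `n` with smaller
numbers are decided by `x (n - 1)`. -/
def codedRel (decode : ℕ → ℕ → ℕ → Prop) (x : ℕ → ℕ) (m n : ℕ) : Prop :=
  (m < n ∧ decode (x (n - 1)) m n) ∨ (n < m ∧ decode (x (m - 1)) m n)


theorem ZFSet.mem_toSet (a u : ZFSet.{0}) : a ∈ u.toSet ↔ a ∈ u := Iff.rfl

theorem ZFSet.toSet_empty : ZFSet.toSet (∅ : ZFSet.{0}) = ∅ := ZFSet.coe_empty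

theorem ZFSet.toSet_insert (x y : ZFSet.{0}) : (insert x y).toSet = insert x y.toSet :=
  ZFSet.coe_insert x y

theorem ZFSet.nonempty_toSet_iff {u : ZFSet.{0}} : u.toSet.Nonempty ↔ u.Nonempty := Iff.rfl

theorem ZFSet.toSet_subset_iff {x y : ZFSet.{0}} : x.toSet ⊆ y.toSet ↔ x ⊆ y := Iff.rfl

theorem ZFSet.toSet_injective : Function.Injective (ZFSet.toSet : ZFSet.{0} → Set ZFSet.{0}) :=
  SetLike.coe_injective

open FirstOrder.Language

section Combinators
variable {α : Type}

/-- membership atomic formula -/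
def memF (a b : α) : L.Formula α :=
  Relations.formula₂ ((0 : Fin 2) : L.Relations 2) (Term.var a) (Term.var b)

def eqF (a b : α) : L.Formula α := Term.equal (Term.var a) (Term.var b)

noncomputable def allF (φ : L.Formula (Option α)) : L.Formula α :=
  (φ.relabel (fun o => o.elim (Sum.inr ()) Sum.inl)).iAlls Unit

noncomputable def exF (φ : L.Formula (Option α)) : L.Formula α :=
  (φ.relabel (fun o => o.elim (Sum.inr ()) Sum.inl)).iExs Unit

/-- Realization in the structure `(M, ∈, r)`. -/
def Rlz (M : ZFSet.{0}) (r : ZFSet → ZFSet → Prop) {α : Type} (φ : L.Formula α)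
    (v : α → M.toSet) : Prop :=
  @Formula.Realize L M.toSet (mStruc M r) α φ v

variable {M : ZFSet.{0}} {r : ZFSet → ZFSet → Prop} {v : α → M.toSet}

theorem rlz_memF {a b : α} : Rlz M r (memF a b) v ↔ (v a : ZFSet) ∈ (v b : ZFSet) := by
  letI := mStruc M r
  show (Relations.formula₂ _ _ _).Realize v ↔ _
  refine (Formula.realize_rel₂ (L := L) (R := (show L.Relations 2 from (0 : Fin 2)))).trans ?_
  show (if (0 : Fin 2) = 0 then _ else _) ↔ _
  rw [if_pos rfl]
  rfl

theorem rlz_eqF {a b : α} : Rlz M r (eqF a b) v ↔ (v a : ZFSet) = (v b : ZFSet) := by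
  letI := mStruc M r
  show (Term.equal _ _).Realize v ↔ _
  rw [Formula.realize_equal]
  simp [Subtype.ext_iff]

theorem rlz_allF {φ : L.Formula (Option α)} :
    Rlz M r (allF φ) v ↔ ∀ m : M.toSet, Rlz M r φ (fun o => o.elim m v) := by
  letI := mStruc M r
  show (allF φ).Realize v ↔ _
  rw [allF, Formula.realize_iAlls]
  simp only [Formula.realize_relabel, Function.comp_def]
  unfold Rlz
  constructor
  · intro h m
    have := h (fun _ => m)
    convert this using 2 with o
    cases o <;> rfl
  · intro h i
    have := h (i ())
    convert this using 2 with o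
    cases o <;> rfl

theorem rlz_exF {φ : L.Formula (Option α)} :
    Rlz M r (exF φ) v ↔ ∃ m : M.toSet, Rlz M r φ (fun o => o.elim m v) := by
  letI := mStruc M r
  show (exF φ).Realize v ↔ _
  rw [exF, Formula.realize_iExs]
  simp only [Formula.realize_relabel, Function.comp_def]
  unfold Rlz
  constructor
  · rintro ⟨i, h⟩
    refine ⟨i (), ?_⟩
    convert h using 2 with o
    cases o <;> rfl
  · rintro ⟨m, h⟩
    refine ⟨fun _ => m, ?_⟩
    convert h using 2 with o
    cases o <;> rfl

theorem rlz_inf {φ ψ : L.Formula α} : Rlz M r (φ ⊓ ψ) v ↔ Rlz M r φ v ∧ Rlz M r ψ v := by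
  letI := mStruc M r; exact Formula.realize_inf

theorem rlz_sup {φ ψ : L.Formula α} : Rlz M r (φ ⊔ ψ) v ↔ Rlz M r φ v ∨ Rlz M r ψ v := by
  letI := mStruc M r; exact Formula.realize_sup

theorem rlz_imp {φ ψ : L.Formula α} : Rlz M r (φ.imp ψ) v ↔ (Rlz M r φ v → Rlz M r ψ v) := by
  letI := mStruc M r; exact Formula.realize_imp

theorem rlz_iff {φ ψ : L.Formula α} : Rlz M r (φ.iff ψ) v ↔ (Rlz M r φ v ↔ Rlz M r ψ v) := by
  letI := mStruc M r; exact Formula.realize_iff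

theorem rlz_not {φ : L.Formula α} : Rlz M r (φ.not) v ↔ ¬ Rlz M r φ v := by
  letI := mStruc M r; exact Formula.realize_not

end Combinators

/-! ### Set-theoretic formulas -/

section SetFormulas
variable {α : Type}

noncomputable def subF (a b : α) : L.Formula α :=
  allF ((memF none (some a)).imp (memF none (some b)))

noncomputable def emptyF (a : α) : L.Formula α :=
  allF ((memF none (some a)).not)

noncomputable def sngF (u b : α) : L.Formula α :=
  allF ((memF none (some u)).iff (eqF none (some b)))

noncomputable def dubF (u b c : α) : L.Formula α :=
  allF ((memF none (some u)).iff (eqF none (some b) ⊔ eqF none (some c)))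

noncomputable def pairF (p b c : α) : L.Formula α :=
  exF (exF (sngF (some none) (some (some b)) ⊓ dubF none (some (some b)) (some (some c)) ⊓
    dubF (some (some p)) (some none) none))

noncomputable def succF (s m : α) : L.Formula α :=
  allF ((memF none (some s)).iff (memF none (some m) ⊔ eqF none (some m)))

noncomputable def transF (a : α) : L.Formula α :=
  allF ((memF none (some a)).imp (subF none (some a)))

noncomputable def ordF (a : α) : L.Formula α :=
  transF a ⊓ allF ((memF none (some a)).imp (transF none))

noncomputable def omegaF (d : α) : L.Formula α :=
  ordF d ⊓ exF (emptyF none ⊓ memF none (some d)) ⊓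
  allF ((memF none (some d)).imp
    (exF (succF none (some none) ⊓ memF none (some (some d))))) ⊓
  allF ((memF none (some d)).imp
    ((emptyF none) ⊔ exF (memF none (some none) ⊓ succF (some none) none)))

noncomputable def surjF (s d b : α) : L.Formula α :=
  (allF ((memF none (some s)).imp
    (exF (exF (pairF (some (some none)) (some none) none ⊓
      memF (some none) (some (some (some d))) ⊓ memF none (some (some (some b)))))))) ⊓
  (allF (allF (allF (
    ((exF (pairF none (some (some (some none))) (some (some none)) ⊓
        memF none (some (some (some (some s)))))) ⊓
     (exF (pairF none (some (some (some none))) (some none) ⊓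
        memF none (some (some (some (some s))))))).imp
    (eqF (some none) none))))) ⊓
  (allF ((memF none (some b)).imp
    (exF (exF (memF (some none) (some (some (some d))) ⊓
      memF none (some (some (some s))) ⊓ pairF none (some none) (some (some none)))))))

noncomputable def cardF : ℕ → {α : Type} → α → L.Formula α
  | 0, _, b => emptyF b
  | (n+1), _, b => exF (exF (
      memF (some none) (some (some b)) ⊓
      allF ((memF none (some none)).iff
        (memF none (some (some (some b))) ⊓ (eqF none (some (some none))).not)) ⊓
      cardF n none))

noncomputable def ctblF (a : α) : L.Formula α :=
  ordF a ⊓ (emptyF a ⊔ ((exF (omegaF none)).not ⊔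
    exF (exF (omegaF (some none) ⊓ surjF none (some none) (some (some a))))))

end SetFormulas

/-! ### Semantic counterparts -/




def IsOmegaZ (d : ZFSet.{0}) : Prop :=
  IsOrd d ∧ ∅ ∈ d ∧ (∀ m, m ∈ d → insert m m ∈ d) ∧
    (∀ m, m ∈ d → m = ∅ ∨ ∃ j, j ∈ m ∧ m = insert j j)

def SurjRel (s d b : ZFSet.{0}) : Prop :=
  (∀ q, q ∈ s → ∃ m u, m ∈ d ∧ u ∈ b ∧ q = ZFSet.pair m u) ∧
  (∀ m u u', ZFSet.pair m u ∈ s → ZFSet.pair m u' ∈ s → u = u') ∧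
  (∀ u, u ∈ b → ∃ m, m ∈ d ∧ ZFSet.pair m u ∈ s)

def CtblIn (Hs a : ZFSet.{0}) : Prop :=
  IsOrd a ∧ (a = ∅ ∨ (¬ ∃ d, d ∈ Hs ∧ IsOmegaZ d) ∨
    ∃ d s, d ∈ Hs ∧ s ∈ Hs ∧ IsOmegaZ d ∧ SurjRel s d a)




/-! ### Realization lemmas over a transitive `Hs` -/

section RlzSem
variable {Hs : ZFSet.{0}} {r : ZFSet → ZFSet → Prop} {α : Type} {v : α → Hs.toSet}

theorem memHs (x : Hs.toSet) : (x : ZFSet) ∈ Hs := x.2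

theorem mem_Hs_of_mem (tr : Hs.IsTransitive) {x : Hs.toSet} {z : ZFSet}
    (hz : z ∈ (x : ZFSet)) : z ∈ Hs := tr _ (memHs x) hz

theorem rlz_subF (tr : Hs.IsTransitive) {a b : α} :
    Rlz Hs r (subF a b) v ↔ (v a : ZFSet) ⊆ (v b : ZFSet) := by
  rw [subF, rlz_allF]
  constructor
  · intro h z hz
    have := h ⟨z, mem_Hs_of_mem tr hz⟩
    rw [rlz_imp, rlz_memF, rlz_memF] at this
    exact this hz
  · intro h m
    rw [rlz_imp, rlz_memF, rlz_memF]
    exact fun hm => h hm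

theorem rlz_emptyF (tr : Hs.IsTransitive) {a : α} :
    Rlz Hs r (emptyF a) v ↔ (v a : ZFSet) = ∅ := by
  rw [emptyF, rlz_allF]
  constructor
  · intro h
    rw [ZFSet.eq_empty]
    intro z hz
    have := h ⟨z, mem_Hs_of_mem tr hz⟩
    rw [rlz_not, rlz_memF] at this
    exact this hz
  · intro h m
    rw [rlz_not, rlz_memF]
    simp only [Option.elim]
    rw [h]
    exact ZFSet.notMem_empty _

theorem rlz_sngF (tr : Hs.IsTransitive) {a b : α} :
    Rlz Hs r (sngF a b) v ↔ (v a : ZFSet) = {(v b : ZFSet)} := by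
  rw [sngF, rlz_allF]
  constructor
  · intro h
    apply ZFSet.ext
    intro z
    rw [ZFSet.mem_singleton]
    constructor
    · intro hz
      have := h ⟨z, mem_Hs_of_mem tr hz⟩
      rw [rlz_iff, rlz_memF, rlz_eqF] at this
      exact this.1 hz
    · rintro rfl
      have := h (v b)
      rw [rlz_iff, rlz_memF, rlz_eqF] at this
      exact this.2 rfl
  · intro h m
    rw [rlz_iff, rlz_memF, rlz_eqF]
    simp only [Option.elim]
    rw [h, ZFSet.mem_singleton]

theorem rlz_dubF (tr : Hs.IsTransitive) {a b c : α} :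
    Rlz Hs r (dubF a b c) v ↔ (v a : ZFSet) = insert (v b : ZFSet) {(v c : ZFSet)} := by
  rw [dubF, rlz_allF]
  constructor
  · intro h
    apply ZFSet.ext
    intro z
    rw [ZFSet.mem_insert_iff, ZFSet.mem_singleton]
    constructor
    · intro hz
      have := h ⟨z, mem_Hs_of_mem tr hz⟩
      rw [rlz_iff, rlz_memF, rlz_sup, rlz_eqF, rlz_eqF] at this
      exact this.1 hz
    · intro hz
      rcases hz with rfl | rfl
      · have := h (v b)
        rw [rlz_iff, rlz_memF, rlz_sup, rlz_eqF, rlz_eqF] at this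
        exact this.2 (Or.inl rfl)
      · have := h (v c)
        rw [rlz_iff, rlz_memF, rlz_sup, rlz_eqF, rlz_eqF] at this
        exact this.2 (Or.inr rfl)
  · intro h m
    rw [rlz_iff, rlz_memF, rlz_sup, rlz_eqF, rlz_eqF]
    simp only [Option.elim]
    rw [h, ZFSet.mem_insert_iff, ZFSet.mem_singleton]

theorem rlz_pairF (tr : Hs.IsTransitive) {p b c : α} :
    Rlz Hs r (pairF p b c) v ↔ (v p : ZFSet) = ZFSet.pair (v b : ZFSet) (v c : ZFSet) := by
  rw [pairF, rlz_exF]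
  constructor
  · rintro ⟨u1, h⟩
    rw [rlz_exF] at h
    obtain ⟨u2, h⟩ := h
    rw [rlz_inf, rlz_inf, rlz_sngF tr, rlz_dubF tr, rlz_dubF tr] at h
    obtain ⟨⟨h1, h2⟩, h3⟩ := h
    simp only [Option.elim] at h1 h2 h3
    rw [ZFSet.pair, ← h1, ← h2]
    exact h3
  · intro h
    have hb : ({(v b : ZFSet)} : ZFSet) ∈ Hs := by
      apply mem_Hs_of_mem tr (x := v p)
      rw [h, ZFSet.pair]
      exact ZFSet.mem_insert _ _
    have hbc : (insert (v b : ZFSet) {(v c : ZFSet)} : ZFSet) ∈ Hs := by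
      apply mem_Hs_of_mem tr (x := v p)
      rw [h, ZFSet.pair]
      exact ZFSet.mem_insert_of_mem _ (ZFSet.mem_singleton.2 rfl)
    refine ⟨⟨_, hb⟩, ?_⟩
    rw [rlz_exF]
    refine ⟨⟨_, hbc⟩, ?_⟩
    rw [rlz_inf, rlz_inf, rlz_sngF tr, rlz_dubF tr, rlz_dubF tr]
    refine ⟨⟨rfl, rfl⟩, ?_⟩
    simp only [Option.elim]
    rw [h, ZFSet.pair]

theorem rlz_succF (tr : Hs.IsTransitive) {a b : α} :
    Rlz Hs r (succF a b) v ↔ (v a : ZFSet) = insert (v b : ZFSet) (v b : ZFSet) := by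
  rw [succF, rlz_allF]
  constructor
  · intro h
    apply ZFSet.ext
    intro z
    rw [ZFSet.mem_insert_iff]
    constructor
    · intro hz
      have := h ⟨z, mem_Hs_of_mem tr hz⟩
      rw [rlz_iff, rlz_memF, rlz_sup, rlz_memF, rlz_eqF] at this
      exact (this.1 hz).symm
    · intro hz
      have hzH : z ∈ Hs := by
        rcases hz with rfl | hz'
        · exact memHs (v b)
        · exact mem_Hs_of_mem tr hz'
      have := h ⟨z, hzH⟩
      rw [rlz_iff, rlz_memF, rlz_sup, rlz_memF, rlz_eqF] at this
      exact this.2 hz.symm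
  · intro h m
    rw [rlz_iff, rlz_memF, rlz_sup, rlz_memF, rlz_eqF]
    simp only [Option.elim]
    rw [h, ZFSet.mem_insert_iff]
    exact or_comm.trans (or_congr_right Iff.rfl)

theorem rlz_transF (tr : Hs.IsTransitive) {a : α} :
    Rlz Hs r (transF a) v ↔ (v a : ZFSet).IsTransitive := by
  rw [transF, rlz_allF]
  constructor
  · intro h z hz
    have := h ⟨z, mem_Hs_of_mem tr hz⟩
    rw [rlz_imp, rlz_memF, rlz_subF tr] at this
    exact this hz
  · intro h m
    rw [rlz_imp, rlz_memF, rlz_subF tr]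
    simp only [Option.elim]
    exact fun hm => h _ hm

theorem rlz_ordF (tr : Hs.IsTransitive) {a : α} :
    Rlz Hs r (ordF a) v ↔ IsOrd (v a : ZFSet) := by
  rw [ordF, rlz_inf, rlz_transF tr, rlz_allF]
  constructor
  · rintro ⟨h1, h2⟩
    refine ⟨h1, fun y hy => ?_⟩
    rw [ZFSet.mem_toSet] at hy
    have := h2 ⟨y, mem_Hs_of_mem tr hy⟩
    rw [rlz_imp, rlz_memF, rlz_transF tr] at this
    exact this hy
  · rintro ⟨h1, h2⟩
    refine ⟨h1, fun m => ?_⟩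
    rw [rlz_imp, rlz_memF, rlz_transF tr]
    simp only [Option.elim]
    intro hm
    exact h2 _ (ZFSet.mem_toSet _ _ |>.2 hm)

theorem rlz_omegaF (tr : Hs.IsTransitive) {d : α} :
    Rlz Hs r (omegaF d) v ↔ IsOmegaZ (v d : ZFSet) := by
  rw [omegaF, rlz_inf, rlz_inf, rlz_inf, rlz_ordF tr, rlz_exF, rlz_allF, rlz_allF]
  constructor
  · rintro ⟨⟨⟨h1, h2⟩, h3⟩, h4⟩
    refine ⟨h1, ?_, ?_, ?_⟩
    · obtain ⟨m, hm⟩ := h2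
      rw [rlz_inf, rlz_emptyF tr, rlz_memF] at hm
      simp only [Option.elim] at hm
      rw [← hm.1]
      exact hm.2
    · intro m hm
      have := h3 ⟨m, mem_Hs_of_mem tr hm⟩
      rw [rlz_imp, rlz_memF] at this
      have := this hm
      rw [rlz_exF] at this
      obtain ⟨k, hk⟩ := this
      rw [rlz_inf, rlz_succF tr, rlz_memF] at hk
      simp only [Option.elim] at hk
      exact hk.1 ▸ hk.2
    · intro m hm
      have := h4 ⟨m, mem_Hs_of_mem tr hm⟩
      rw [rlz_imp, rlz_memF] at this
      have := this hm
      rw [rlz_sup, rlz_emptyF tr, rlz_exF] at this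
      rcases this with h | ⟨jj, hj⟩
      · exact Or.inl h
      · rw [rlz_inf, rlz_memF, rlz_succF tr] at hj
        simp only [Option.elim] at hj
        exact Or.inr ⟨jj, hj.1, hj.2⟩
  · rintro ⟨h1, h2, h3, h4⟩
    refine ⟨⟨⟨h1, ?_⟩, ?_⟩, ?_⟩
    · refine ⟨⟨∅, mem_Hs_of_mem tr (x := ⟨_, memHs (v d)⟩) h2⟩, ?_⟩
      rw [rlz_inf, rlz_emptyF tr, rlz_memF]
      exact ⟨rfl, h2⟩
    · intro m
      rw [rlz_imp, rlz_memF]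
      simp only [Option.elim]
      intro hm
      rw [rlz_exF]
      refine ⟨⟨insert (m : ZFSet) (m : ZFSet), mem_Hs_of_mem tr (x := ⟨_, memHs (v d)⟩) (h3 _ hm)⟩, ?_⟩
      rw [rlz_inf, rlz_succF tr, rlz_memF]
      exact ⟨rfl, h3 _ hm⟩
    · intro m
      rw [rlz_imp, rlz_memF]
      simp only [Option.elim]
      intro hm
      rw [rlz_sup, rlz_emptyF tr, rlz_exF]
      rcases h4 _ hm with h | ⟨jj, hj1, hj2⟩
      · exact Or.inl h
      · refine Or.inr ⟨⟨jj, mem_Hs_of_mem tr (x := m) hj1⟩, ?_⟩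
        rw [rlz_inf, rlz_memF, rlz_succF tr]
        exact ⟨hj1, hj2⟩

theorem rlz_surjF (tr : Hs.IsTransitive) {s d b : α} :
    Rlz Hs r (surjF s d b) v ↔ SurjRel (v s : ZFSet) (v d : ZFSet) (v b : ZFSet) := by
  have pairmem : ∀ {x y c : ZFSet}, ZFSet.pair x y ∈ c → c ∈ Hs → x ∈ Hs ∧ y ∈ Hs := by
    intro x y c hp hc
    have hpH : ZFSet.pair x y ∈ Hs := tr _ hc hp
    have h1 : ({x} : ZFSet) ∈ Hs := tr _ hpH (ZFSet.mem_insert _ _)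
    have h2 : (insert x {y} : ZFSet) ∈ Hs :=
      tr _ hpH (ZFSet.mem_insert_of_mem _ (ZFSet.mem_singleton.2 rfl))
    exact ⟨tr _ h1 (ZFSet.mem_singleton.2 rfl),
      tr _ h2 (ZFSet.mem_insert_of_mem _ (ZFSet.mem_singleton.2 rfl))⟩
  rw [surjF, rlz_inf, rlz_inf, rlz_allF, rlz_allF, rlz_allF]
  constructor
  · rintro ⟨⟨h1, h2⟩, h3⟩
    refine ⟨?_, ?_, ?_⟩
    · intro q hq
      have := h1 ⟨q, mem_Hs_of_mem tr hq⟩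
      rw [rlz_imp, rlz_memF] at this
      have := this hq
      rw [rlz_exF] at this
      obtain ⟨m, this⟩ := this
      rw [rlz_exF] at this
      obtain ⟨u, this⟩ := this
      rw [rlz_inf, rlz_inf, rlz_pairF tr, rlz_memF, rlz_memF] at this
      simp only [Option.elim] at this
      exact ⟨m, u, this.1.2, this.2, this.1.1⟩
    · intro m u u' hmu hmu'
      have hm : (m : ZFSet) ∈ Hs ∧ (u : ZFSet) ∈ Hs := pairmem hmu (memHs (v s))
      have hu' : (u' : ZFSet) ∈ Hs := (pairmem hmu' (memHs (v s))).2
      have := h2 ⟨m, hm.1⟩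
      rw [rlz_allF] at this
      have := this ⟨u, hm.2⟩
      rw [rlz_allF] at this
      have := this ⟨u', hu'⟩
      rw [rlz_imp, rlz_inf, rlz_exF, rlz_exF, rlz_eqF] at this
      apply this
      constructor
      · refine ⟨⟨_, tr _ (memHs (v s)) hmu⟩, ?_⟩
        rw [rlz_inf, rlz_pairF tr, rlz_memF]
        exact ⟨rfl, hmu⟩
      · refine ⟨⟨_, tr _ (memHs (v s)) hmu'⟩, ?_⟩
        rw [rlz_inf, rlz_pairF tr, rlz_memF]
        exact ⟨rfl, hmu'⟩
    · intro u hu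
      have := h3 ⟨u, mem_Hs_of_mem tr hu⟩
      rw [rlz_imp, rlz_memF] at this
      have := this hu
      rw [rlz_exF] at this
      obtain ⟨m, this⟩ := this
      rw [rlz_exF] at this
      obtain ⟨q, this⟩ := this
      rw [rlz_inf, rlz_inf, rlz_memF, rlz_memF, rlz_pairF tr] at this
      simp only [Option.elim] at this
      refine ⟨m, this.1.1, ?_⟩
      rw [← this.2]
      exact this.1.2
  · rintro ⟨h1, h2, h3⟩
    refine ⟨⟨?_, ?_⟩, ?_⟩
    · intro q
      rw [rlz_imp, rlz_memF]
      simp only [Option.elim]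
      intro hq
      obtain ⟨m, u, hm, hu, hq'⟩ := h1 _ hq
      rw [rlz_exF]
      refine ⟨⟨m, mem_Hs_of_mem tr (x := v d) hm⟩, ?_⟩
      rw [rlz_exF]
      refine ⟨⟨u, mem_Hs_of_mem tr (x := v b) hu⟩, ?_⟩
      rw [rlz_inf, rlz_inf, rlz_pairF tr, rlz_memF, rlz_memF]
      exact ⟨⟨hq', hm⟩, hu⟩
    · intro m
      rw [rlz_allF]
      intro u
      rw [rlz_allF]
      intro u'
      rw [rlz_imp, rlz_inf, rlz_exF, rlz_exF, rlz_eqF]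
      rintro ⟨⟨q, hq⟩, ⟨q', hq'⟩⟩
      rw [rlz_inf, rlz_pairF tr, rlz_memF] at hq hq'
      simp only [Option.elim] at hq hq' ⊢
      apply h2 (m : ZFSet) (u : ZFSet) (u' : ZFSet)
      · rw [← hq.1]; exact hq.2
      · rw [← hq'.1]; exact hq'.2
    · intro u
      rw [rlz_imp, rlz_memF]
      simp only [Option.elim]
      intro hu
      obtain ⟨m, hm, hs⟩ := h3 _ hu
      rw [rlz_exF]
      refine ⟨⟨m, mem_Hs_of_mem tr (x := v d) hm⟩, ?_⟩
      rw [rlz_exF]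
      refine ⟨⟨ZFSet.pair m u, mem_Hs_of_mem tr (x := v s) hs⟩, ?_⟩
      rw [rlz_inf, rlz_inf, rlz_memF, rlz_memF, rlz_pairF tr]
      exact ⟨⟨hm, hs⟩, rfl⟩

theorem rlz_cardF (tr : Hs.IsTransitive)
    (hsub : ∀ c x : ZFSet, x ∈ Hs → c ⊆ x → c.toSet.Finite → c ∈ Hs) :
    ∀ (n : ℕ) {α : Type} (b : α) (v : α → Hs.toSet),
      Rlz Hs r (cardF n b) v ↔
        ((v b : ZFSet).toSet.Finite ∧ (v b : ZFSet).toSet.ncard = n) := by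
  intro n
  induction n with
  | zero =>
    intro α b v
    have hunf : cardF 0 b = emptyF b := rfl
    rw [hunf, rlz_emptyF tr]
    constructor
    · intro h
      rw [h]
      simp [ZFSet.toSet_empty]
    · rintro ⟨h1, h2⟩
      rw [Set.ncard_eq_zero h1] at h2
      exact ZFSet.toSet_injective (by rw [h2, ZFSet.toSet_empty])
  | succ n ih =>
    intro α b v
    have hunf : cardF (n+1) b = exF (exF (
      memF (some none) (some (some b)) ⊓
      allF ((memF none (some none)).iff
        (memF none (some (some (some b))) ⊓ (eqF none (some (some none))).not)) ⊓
      cardF n none)) := rfl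
    rw [hunf, rlz_exF]
    constructor
    · rintro ⟨x, hx⟩
      rw [rlz_exF] at hx
      obtain ⟨b', hb'⟩ := hx
      rw [rlz_inf, rlz_inf, rlz_memF, rlz_allF, ih] at hb'
      obtain ⟨⟨hxb, hcl⟩, hfin, hcard⟩ := hb'
      simp only [Option.elim] at hxb hfin hcard
      have hbs : (b' : ZFSet).toSet = (v b : ZFSet).toSet \ {(x : ZFSet)} := by
        apply Set.ext
        intro t
        simp only [ZFSet.mem_toSet, Set.mem_diff, Set.mem_singleton_iff]
        constructor
        · intro ht
          have := hcl ⟨t, mem_Hs_of_mem tr (x := b') ht⟩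
          rw [rlz_iff, rlz_inf, rlz_memF, rlz_memF, rlz_not, rlz_eqF] at this
          simp only [Option.elim] at this
          exact this.1 ht
        · rintro ⟨ht1, ht2⟩
          have := hcl ⟨t, mem_Hs_of_mem tr (x := v b) ht1⟩
          rw [rlz_iff, rlz_inf, rlz_memF, rlz_memF, rlz_not, rlz_eqF] at this
          simp only [Option.elim] at this
          exact this.2 ⟨ht1, ht2⟩
      have hins : (v b : ZFSet).toSet = insert (x : ZFSet) ((b' : ZFSet).toSet) := by
        rw [hbs, Set.insert_diff_singleton, Set.insert_eq_self.2]
        rw [ZFSet.mem_toSet]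
        exact hxb
      rw [hins]
      refine ⟨Set.Finite.insert _ hfin, ?_⟩
      rw [Set.ncard_insert_of_notMem ?_ hfin, hcard]
      rw [hbs]
      exact fun h => h.2 rfl
    · rintro ⟨hfin, hcard⟩
      have hne : (v b : ZFSet).toSet.Nonempty := by
        rw [Set.nonempty_iff_ne_empty]
        intro h
        rw [h] at hcard
        simp at hcard
      obtain ⟨x, hx⟩ := hne
      rw [ZFSet.mem_toSet] at hx
      have hxH : x ∈ Hs := mem_Hs_of_mem tr (x := v b) hx
      set b'Z : ZFSet := ZFSet.sep (fun t => t ≠ x) (v b : ZFSet) with hb'Z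
      have hb's : b'Z.toSet = (v b : ZFSet).toSet \ {x} := by
        apply Set.ext
        intro t
        simp only [ZFSet.mem_toSet, Set.mem_diff, Set.mem_singleton_iff, hb'Z, ZFSet.mem_sep]
      have hb'H : b'Z ∈ Hs := by
        apply hsub b'Z (v b : ZFSet) (memHs (v b))
        · intro t ht
          exact (ZFSet.mem_sep.1 ht).1
        · rw [hb's]
          exact hfin.subset Set.diff_subset
      have hxb' : x ∉ b'Z.toSet := by
        rw [hb's]
        exact fun h => h.2 rfl
      have hinsx : (v b : ZFSet).toSet = insert x b'Z.toSet := by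
        rw [hb's, Set.insert_diff_singleton, Set.insert_eq_self.2]
        rw [ZFSet.mem_toSet]
        exact hx
      have hfin' : b'Z.toSet.Finite := by
        rw [hb's]; exact hfin.subset Set.diff_subset
      have hcard' : b'Z.toSet.ncard = n := by
        have := hcard
        rw [hinsx, Set.ncard_insert_of_notMem hxb' hfin'] at this
        omega
      refine ⟨⟨x, hxH⟩, ?_⟩
      rw [rlz_exF]
      refine ⟨⟨b'Z, hb'H⟩, ?_⟩
      rw [rlz_inf, rlz_inf, rlz_memF, rlz_allF, ih]
      refine ⟨⟨hx, ?_⟩, ?_⟩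
      · intro t
        rw [rlz_iff, rlz_inf, rlz_memF, rlz_memF, rlz_not, rlz_eqF]
        simp only [Option.elim]
        rw [hb'Z]
        exact ZFSet.mem_sep
      · simp only [Option.elim]
        exact ⟨hfin', hcard'⟩

theorem rlz_ctblF (tr : Hs.IsTransitive) {a : α} :
    Rlz Hs r (ctblF a) v ↔ CtblIn Hs (v a : ZFSet) := by
  rw [ctblF, rlz_inf, rlz_ordF tr, rlz_sup, rlz_sup, rlz_emptyF tr, rlz_not, rlz_exF, rlz_exF]
  apply and_congr Iff.rfl
  apply or_congr Iff.rfl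
  apply or_congr
  · constructor
    · intro h ⟨d, hd, hOm⟩
      exact h ⟨⟨d, hd⟩, (rlz_omegaF tr).2 hOm⟩
    · rintro h ⟨d, hd⟩
      rw [rlz_omegaF tr] at hd
      exact h ⟨d, memHs d, hd⟩
  · constructor
    · rintro ⟨d, hd⟩
      rw [rlz_exF] at hd
      obtain ⟨sZ, hsZ⟩ := hd
      rw [rlz_inf, rlz_omegaF tr, rlz_surjF tr] at hsZ
      simp only [Option.elim] at hsZ
      exact ⟨d, sZ, memHs d, memHs sZ, hsZ.1, hsZ.2⟩
    · rintro ⟨d, sZ, hd, hs, hOm, hSurj⟩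
      refine ⟨⟨d, hd⟩, ?_⟩
      rw [rlz_exF]
      refine ⟨⟨sZ, hs⟩, ?_⟩
      rw [rlz_inf, rlz_omegaF tr, rlz_surjF tr]
      exact ⟨hOm, hSurj⟩

end RlzSem

/-! ### Ordinal facts for `ZFSet` -/

theorem isOrd_of_mem {x y : ZFSet.{0}} (hx : IsOrd x) (hy : y ∈ x) : IsOrd y := by
  refine ⟨hx.2 y (ZFSet.mem_toSet _ _ |>.2 hy), fun z hz => ?_⟩
  rw [ZFSet.mem_toSet] at hz
  exact hx.2 z (ZFSet.mem_toSet _ _ |>.2 (hx.1.mem_trans hz hy))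

theorem ord_trichotomy : ∀ x : ZFSet.{0}, IsOrd x → ∀ y : ZFSet.{0}, IsOrd y →
    x ∈ y ∨ x = y ∨ y ∈ x := by
  intro x
  induction x using WellFounded.induction ZFSet.mem_wf with
  | _ x IH1 =>
    intro hx y
    induction y using WellFounded.induction ZFSet.mem_wf with
    | _ y IH2 =>
      intro hy
      by_cases hxy : x ∈ y
      · exact Or.inl hxy
      by_cases hyx : y ∈ x
      · exact Or.inr (Or.inr hyx)
      refine Or.inr (Or.inl (ZFSet.ext fun z => ⟨fun hz => ?_, fun hz => ?_⟩))
      · rcases IH1 z hz (isOrd_of_mem hx hz) y hy with h | h | h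
        · exact h
        · exact absurd (h ▸ hz) hyx
        · exact absurd (hx.1.mem_trans h hz) hyx
      · rcases IH2 z hz (isOrd_of_mem hy hz) with h | h | h
        · exact absurd (hy.1.mem_trans h hz) hxy
        · exact absurd (h ▸ hz) hxy
        · exact h

theorem isOrd_empty : IsOrd (∅ : ZFSet.{0}) :=
  ⟨ZFSet.isTransitive_empty, fun y hy => by
    rw [ZFSet.mem_toSet] at hy
    exact absurd hy (ZFSet.notMem_empty _)⟩

theorem mem_omega1_of_countable {w x : ZFSet.{0}} (hw : IsOmega1 w) (hx : IsOrd x)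
    (hc : x.toSet.Countable) : x ∈ w := by
  rcases ord_trichotomy x hx w hw.1 with h | h | h
  · exact h
  · exact absurd (h ▸ hc) hw.2.1
  · exact absurd (hc.mono (ZFSet.toSet_subset_iff.2 (hx.1.subset_of_mem h))) hw.2.1

theorem empty_mem_omega1 {w : ZFSet.{0}} (hw : IsOmega1 w) : ∅ ∈ w :=
  mem_omega1_of_countable hw isOrd_empty (by simp [ZFSet.toSet_empty])

theorem mem_omega1_iff {w x : ZFSet.{0}} (hw : IsOmega1 w) :
    x ∈ w ↔ IsOrd x ∧ x.toSet.Countable :=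
  ⟨fun h => ⟨isOrd_of_mem hw.1 h, hw.2.2 x (ZFSet.mem_toSet _ _ |>.2 h)⟩,
   fun ⟨h1, h2⟩ => mem_omega1_of_countable hw h1 h2⟩

/-! ### The finite von Neumann ordinals `natZ` -/

def natZ : ℕ → ZFSet.{0}
  | 0 => ∅
  | n+1 => insert (natZ n) (natZ n)

theorem mem_natZ {x : ZFSet.{0}} : ∀ {n : ℕ}, x ∈ natZ n ↔ ∃ k < n, x = natZ k := by
  intro n
  induction n with
  | zero => simp [natZ]
  | succ n ih =>
    rw [show natZ (n+1) = insert (natZ n) (natZ n) from rfl, ZFSet.mem_insert_iff, ih]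
    constructor
    · rintro (rfl | ⟨k, hk, rfl⟩)
      · exact ⟨n, Nat.lt_succ_self n, rfl⟩
      · exact ⟨k, Nat.lt_succ_of_lt hk, rfl⟩
    · rintro ⟨k, hk, rfl⟩
      rcases Nat.lt_succ_iff_lt_or_eq.1 hk with h | rfl
      · exact Or.inr ⟨k, h, rfl⟩
      · exact Or.inl rfl

theorem natZ_mem_of_lt {m n : ℕ} (h : m < n) : natZ m ∈ natZ n :=
  mem_natZ.2 ⟨m, h, rfl⟩

theorem natZ_injective : Function.Injective natZ := by
  intro m n h
  by_contra hmn
  rcases Nat.lt_or_ge m n with hlt | hge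
  · exact ZFSet.mem_irrefl _ (h ▸ natZ_mem_of_lt hlt)
  · exact ZFSet.mem_irrefl _ (h ▸ natZ_mem_of_lt (lt_of_le_of_ne hge (Ne.symm hmn)))

theorem isOrd_natZ (n : ℕ) : IsOrd (natZ n) := by
  induction n using Nat.strong_induction_on with
  | _ n ih =>
    constructor
    · intro y hy
      rw [mem_natZ] at hy
      obtain ⟨k, hk, rfl⟩ := hy
      intro z hz
      rw [mem_natZ] at hz ⊢
      obtain ⟨j, hj, rfl⟩ := hz
      exact ⟨j, hj.trans hk, rfl⟩
    · intro y hy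
      rw [ZFSet.mem_toSet, mem_natZ] at hy
      obtain ⟨k, hk, rfl⟩ := hy
      exact (ih k hk).1

theorem toSet_natZ (n : ℕ) : (natZ n).toSet = natZ '' {k | k < n} := by
  apply Set.ext
  intro z
  rw [ZFSet.mem_toSet, mem_natZ]
  constructor
  · rintro ⟨k, hk, rfl⟩
    exact ⟨k, hk, rfl⟩
  · rintro ⟨k, hk, rfl⟩
    exact ⟨k, hk, rfl⟩

theorem natZ_toSet_finite (n : ℕ) : (natZ n).toSet.Finite := by
  rw [toSet_natZ]
  exact Set.Finite.image _ (Set.finite_Iio n)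

theorem natZ_mem_isOmegaZ {d : ZFSet.{0}} (hd : IsOmegaZ d) : ∀ n, natZ n ∈ d := by
  intro n
  induction n with
  | zero => exact hd.2.1
  | succ n ih => exact hd.2.2.1 _ ih

theorem isOmegaZ_subset_natZ {d : ZFSet.{0}} (hd : IsOmegaZ d) :
    ∀ e, e ∈ d → ∃ n, e = natZ n := by
  intro e
  induction e using WellFounded.induction ZFSet.mem_wf with
  | _ e IH =>
    intro he
    rcases hd.2.2.2 e he with rfl | ⟨j, hj, rfl⟩
    · exact ⟨0, rfl⟩
    · obtain ⟨n, rfl⟩ := IH j hj (hd.1.1.mem_trans hj he)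
      exact ⟨n+1, rfl⟩

theorem isOmegaZ_countable {d : ZFSet.{0}} (hd : IsOmegaZ d) : d.toSet.Countable := by
  have : d.toSet ⊆ Set.range natZ := by
    intro e he
    rw [ZFSet.mem_toSet] at he
    obtain ⟨n, rfl⟩ := isOmegaZ_subset_natZ hd e he
    exact ⟨n, rfl⟩
  exact Set.Countable.mono this (Set.countable_range _)

theorem isOmegaZ_infinite {d : ZFSet.{0}} (hd : IsOmegaZ d) : d.toSet.Infinite := by
  apply Set.infinite_of_injective_forall_mem (f := fun n : ℕ => natZ n) natZ_injective
  intro n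
  rw [ZFSet.mem_toSet]
  exact natZ_mem_isOmegaZ hd n

theorem surjRel_countable {s d b : ZFSet.{0}} (h : SurjRel s d b)
    (hd : d.toSet.Countable) : b.toSet.Countable := by
  have : ∀ u : b.toSet, ∃ m : d.toSet, ZFSet.pair (m : ZFSet) (u : ZFSet) ∈ s := by
    rintro ⟨u, hu⟩
    rw [ZFSet.mem_toSet] at hu
    obtain ⟨m, hm, hms⟩ := h.2.2 u hu
    exact ⟨⟨m, (ZFSet.mem_toSet _ _).2 hm⟩, hms⟩
  choose F hF using this
  have hinj : Function.Injective F := by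
    intro u u' huu
    have h1 := hF u
    have h2 := hF u'
    rw [huu] at h1
    exact Subtype.ext (h.2.1 _ _ _ h1 h2)
  haveI := hd.to_subtype
  haveI := hinj.countable
  exact Set.countable_coe_iff.1 inferInstance

/-! ### Facts about `HerLt` and `H(χ)` -/

theorem herLt_iff {κ : Cardinal.{1}} {x : ZFSet.{0}} :
    HerLt κ x ↔ Cardinal.mk x.toSet < κ ∧ ∀ z ∈ x, HerLt κ z := by
  rw [HerLt, WellFounded.fix_eq]
  rfl

theorem herLt_mem {κ : Cardinal.{1}} {x y : ZFSet.{0}} (h : HerLt κ x) (hy : y ∈ x) :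
    HerLt κ y := (herLt_iff.1 h).2 y hy

theorem herLt_card {κ : Cardinal.{1}} {x : ZFSet.{0}} (h : HerLt κ x) :
    Cardinal.mk x.toSet < κ := (herLt_iff.1 h).1

theorem herLt_of {κ : Cardinal.{1}} {x : ZFSet.{0}} (h1 : Cardinal.mk x.toSet < κ)
    (h2 : ∀ z ∈ x, HerLt κ z) : HerLt κ x := herLt_iff.2 ⟨h1, h2⟩

theorem herLt_finite {κ : Cardinal.{1}} (hκ : Cardinal.aleph0 ≤ κ) {x : ZFSet.{0}}
    (hfin : x.toSet.Finite) (h2 : ∀ z ∈ x, HerLt κ z) : HerLt κ x :=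
  herLt_of (lt_of_lt_of_le (Cardinal.lt_aleph0_iff_set_finite.2 hfin) hκ) h2

theorem herLt_empty {κ : Cardinal.{1}} (hκ : Cardinal.aleph0 ≤ κ) : HerLt κ (∅ : ZFSet.{0}) :=
  herLt_finite hκ (by simp [ZFSet.toSet_empty]) (fun z hz => absurd hz (ZFSet.notMem_empty _))

theorem herLt_insert {κ : Cardinal.{1}} (hκ : Cardinal.aleph0 ≤ κ) {x y : ZFSet.{0}}
    (hx : HerLt κ x) (hy : HerLt κ y) : HerLt κ (insert x y) := by
  apply herLt_of
  · rw [ZFSet.toSet_insert]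
    apply lt_of_le_of_lt (Cardinal.mk_insert_le)
    exact Cardinal.add_lt_of_lt hκ (herLt_card hy) (lt_of_lt_of_le Cardinal.one_lt_aleph0 hκ)
  · intro z hz
    rcases ZFSet.mem_insert_iff.1 hz with rfl | hz
    · exact hx
    · exact herLt_mem hy hz

theorem herLt_kpair {κ : Cardinal.{1}} (hκ : Cardinal.aleph0 ≤ κ) {x y : ZFSet.{0}}
    (hx : HerLt κ x) (hy : HerLt κ y) : HerLt κ (ZFSet.pair x y) := by
  have h1 : HerLt κ ({x} : ZFSet) := herLt_insert hκ hx (herLt_empty hκ)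
  have h2 : HerLt κ (insert x {y} : ZFSet) :=
    herLt_insert hκ hx (herLt_insert hκ hy (herLt_empty hκ))
  exact herLt_insert hκ h1 (herLt_insert hκ h2 (herLt_empty hκ))

theorem herLt_subset {κ : Cardinal.{1}} {x c : ZFSet.{0}} (hx : HerLt κ x) (hc : c ⊆ x)
    (hcard : Cardinal.mk c.toSet < κ) : HerLt κ c :=
  herLt_of hcard (fun z hz => herLt_mem hx (hc hz))

theorem herLt_natZ {κ : Cardinal.{1}} (hκ : Cardinal.aleph0 ≤ κ) (n : ℕ) :
    HerLt κ (natZ n) := by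
  induction n using Nat.strong_induction_on with
  | _ n ih =>
    apply herLt_finite hκ (natZ_toSet_finite n)
    intro z hz
    obtain ⟨k, hk, rfl⟩ := mem_natZ.1 hz
    exact ih k hk

section HCard
variable {χ : Cardinal.{1}} {Hs : ZFSet.{0}} (hH : IsHCard χ Hs)

include hH

theorem hcard_transitive : Hs.IsTransitive := by
  intro y hy z hz
  exact (hH z).2 (herLt_mem ((hH y).1 hy) hz)

theorem hcard_subset (hχ : Cardinal.aleph0 ≤ χ) {x c : ZFSet.{0}} (hx : x ∈ Hs) (hc : c ⊆ x)
    (hfin : c.toSet.Finite) : c ∈ Hs :=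
  (hH c).2 (herLt_subset ((hH x).1 hx) hc
    (lt_of_lt_of_le (Cardinal.lt_aleph0_iff_set_finite.2 hfin) hχ))

theorem hcard_subset_card {x c : ZFSet.{0}} (hx : x ∈ Hs) (hc : c ⊆ x)
    (hcard : Cardinal.mk c.toSet < χ) : c ∈ Hs :=
  (hH c).2 (herLt_subset ((hH x).1 hx) hc hcard)

/-- The canonical `ω` as an element of `H(χ)` for `χ > ℵ₀`. -/
theorem omegaZ_spec (hχ : Cardinal.aleph0 < χ) :
    ∃ d : ZFSet.{0}, d ∈ Hs ∧ IsOmegaZ d := by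
  classical
  set d : ZFSet.{0} := ZFSet.sep (fun x => ∃ n, x = natZ n) ZFSet.omega with hd
  have hmem : ∀ x : ZFSet, x ∈ d ↔ ∃ n, x = natZ n := by
    intro x
    rw [hd, ZFSet.mem_sep]
    constructor
    · rintro ⟨_, h⟩; exact h
    · rintro ⟨n, rfl⟩
      refine ⟨?_, n, rfl⟩
      induction n with
      | zero => exact ZFSet.omega_zero
      | succ k ihk => exact ZFSet.omega_succ ihk
  have htoSet : d.toSet = Set.range natZ := by
    apply Set.ext
    intro x
    rw [ZFSet.mem_toSet, hmem]
    exact ⟨fun ⟨n, h⟩ => ⟨n, h.symm⟩, fun ⟨n, h⟩ => ⟨n, h.symm⟩⟩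
  have hOm : IsOmegaZ d := by
    refine ⟨⟨?_, ?_⟩, ?_, ?_, ?_⟩
    · intro y hy
      obtain ⟨n, rfl⟩ := (hmem y).1 hy
      intro z hz
      obtain ⟨k, _, rfl⟩ := mem_natZ.1 hz
      exact (hmem _).2 ⟨k, rfl⟩
    · intro y hy
      rw [ZFSet.mem_toSet] at hy
      obtain ⟨n, rfl⟩ := (hmem y).1 hy
      exact (isOrd_natZ n).1
    · exact (hmem _).2 ⟨0, rfl⟩
    · intro m hm
      obtain ⟨n, rfl⟩ := (hmem m).1 hm
      exact (hmem _).2 ⟨n+1, rfl⟩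
    · intro m hm
      obtain ⟨n, rfl⟩ := (hmem m).1 hm
      cases n with
      | zero => exact Or.inl rfl
      | succ k => exact Or.inr ⟨natZ k, natZ_mem_of_lt (Nat.lt_succ_self k), rfl⟩
  refine ⟨d, (hH d).2 ?_, hOm⟩
  apply herLt_of
  · rw [htoSet]
    exact lt_of_le_of_lt (Cardinal.mk_le_aleph0_iff.2 (Set.countable_range natZ).to_subtype) hχ
  · intro z hz
    obtain ⟨n, rfl⟩ := (hmem z).1 hz
    exact herLt_natZ hχ.le n

end HCard

/-! ### `CtblIn` matches membership in `ω₁` -/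

theorem ctblIn_iff_mem_omega1 {χ : Cardinal.{1}} {Hs w : ZFSet.{0}} (hH : IsHCard χ Hs)
    (hχ : Cardinal.aleph0 ≤ χ) (hw : IsOmega1 w) {a : ZFSet.{0}} (ha : a ∈ Hs) :
    CtblIn Hs a ↔ a ∈ w := by
  constructor
  · rintro ⟨hOrd, hcase⟩
    apply mem_omega1_of_countable hw hOrd
    rcases hcase with rfl | hno | ⟨d, s, hd, hs, hOm, hSurj⟩
    · simp [ZFSet.toSet_empty]
    · by_contra hc
      have hinf : a.toSet.Infinite := fun hfin => hc hfin.countable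
      have h1 : Cardinal.aleph0 < χ := by
        apply lt_of_le_of_lt _ (herLt_card ((hH a).1 ha))
        rw [Cardinal.aleph0_le_mk_iff]
        exact hinf.to_subtype
      exact hno (omegaZ_spec hH h1)
    · exact surjRel_countable hSurj (isOmegaZ_countable hOm)
  · intro haw
    have h := (mem_omega1_iff hw).1 haw
    refine ⟨h.1, ?_⟩
    by_cases hex : ∃ d, d ∈ Hs ∧ IsOmegaZ d
    swap
    · exact Or.inr (Or.inl hex)
    obtain ⟨d, hdH, hOm⟩ := hex
    rcases ZFSet.eq_empty_or_nonempty a with rfl | hne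
    · exact Or.inl rfl
    have hne' : a.toSet.Nonempty := ZFSet.nonempty_toSet_iff.2 hne
    obtain ⟨g, hg⟩ := h.2.exists_surjective hne'
    classical
    set s : ZFSet.{0} :=
      ZFSet.sep (fun q => ∃ n : ℕ, q = ZFSet.pair (natZ n) ((g n : ZFSet))) (ZFSet.prod d a)
      with hsdef
    have hmem : ∀ q : ZFSet, q ∈ s ↔ ∃ n : ℕ, q = ZFSet.pair (natZ n) ((g n : ZFSet)) := by
      intro q
      rw [hsdef, ZFSet.mem_sep]
      constructor
      · rintro ⟨_, h⟩; exact h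
      · rintro ⟨n, rfl⟩
        refine ⟨?_, n, rfl⟩
        rw [ZFSet.pair_mem_prod]
        refine ⟨natZ_mem_isOmegaZ hOm n, ?_⟩
        rw [← ZFSet.mem_toSet]
        exact (g n).2
    have hχ1 : Cardinal.aleph0 < χ := by
      apply lt_of_le_of_lt _ (herLt_card ((hH d).1 hdH))
      rw [Cardinal.aleph0_le_mk_iff]
      exact (isOmegaZ_infinite hOm).to_subtype
    have hsH : s ∈ Hs := by
      apply (hH s).2
      apply herLt_of
      · have hsub : s.toSet ⊆ Set.range (fun n : ℕ => ZFSet.pair (natZ n) ((g n : ZFSet))) := by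
          intro q hq
          rw [ZFSet.mem_toSet] at hq
          obtain ⟨n, rfl⟩ := (hmem q).1 hq
          exact ⟨n, rfl⟩
        apply lt_of_le_of_lt _ hχ1
        apply Cardinal.mk_le_aleph0_iff.2
        exact (((Set.countable_range _).mono hsub)).to_subtype
      · intro z hz
        obtain ⟨n, rfl⟩ := (hmem z).1 hz
        apply herLt_kpair hχ (herLt_natZ hχ n)
        apply herLt_mem ((hH a).1 ha)
        rw [← ZFSet.mem_toSet]
        exact (g n).2
    refine Or.inr (Or.inr ⟨d, s, hdH, hsH, hOm, ?_, ?_, ?_⟩)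
    · intro q hq
      obtain ⟨n, rfl⟩ := (hmem q).1 hq
      refine ⟨natZ n, (g n : ZFSet), natZ_mem_isOmegaZ hOm n, ?_, rfl⟩
      rw [← ZFSet.mem_toSet]
      exact (g n).2
    · intro m u u' hmu hmu'
      obtain ⟨n, hn⟩ := (hmem _).1 hmu
      obtain ⟨n', hn'⟩ := (hmem _).1 hmu'
      obtain ⟨hm1, hu1⟩ := ZFSet.pair_injective hn
      obtain ⟨hm2, hu2⟩ := ZFSet.pair_injective hn'
      have : n = n' := natZ_injective (hm1 ▸ hm2 ▸ rfl)
      rw [hu1, hu2, this]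
    · intro u hu
      obtain ⟨n, hn⟩ := hg ⟨u, (ZFSet.mem_toSet _ _).2 hu⟩
      refine ⟨natZ n, natZ_mem_isOmegaZ hOm n, ?_⟩
      apply (hmem _).2
      refine ⟨n, ?_⟩
      rw [hn]

/-! ### The master formula -/

noncomputable def branchF {α : Type} (p b vv f : α) : L.Formula α :=
  (memF p f ⊓ ctblF vv) ⊔ (emptyF vv ⊓
    (exF (exF (pairF none (some (some b)) (some none) ⊓ memF none (some (some f)) ⊓
      ctblF (some none)))).not)

noncomputable def bodyF {α : Type} (n : ℕ) (p y f η : α) : L.Formula α :=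
  (memF p y).iff (exF (exF (pairF (some (some p)) (some none) none ⊓
    subF (some none) (some (some η)) ⊓ cardF n (some none) ⊓
    branchF (some (some p)) (some none) none (some (some f)))))

noncomputable def PhiF {α : Type} (n : ℕ) (y f η : α) : L.Formula α :=
  allF (bodyF n none (some y) (some f) (some η))

section PhiSem
variable {Hs : ZFSet.{0}} {r : ZFSet → ZFSet → Prop} {α : Type} {v : α → Hs.toSet}

theorem mem_Hs_pair (tr : Hs.IsTransitive) {x y : ZFSet} (h : ZFSet.pair x y ∈ Hs) :
    x ∈ Hs ∧ y ∈ Hs := by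
  have h1 : ({x} : ZFSet) ∈ Hs := tr _ h (ZFSet.mem_insert _ _)
  have h2 : (insert x {y} : ZFSet) ∈ Hs :=
    tr _ h (ZFSet.mem_insert_of_mem _ (ZFSet.mem_singleton.2 rfl))
  exact ⟨tr _ h1 (ZFSet.mem_singleton.2 rfl),
    tr _ h2 (ZFSet.mem_insert_of_mem _ (ZFSet.mem_singleton.2 rfl))⟩

theorem rlz_branchF (tr : Hs.IsTransitive) {p b vv f : α} :
    Rlz Hs r (branchF p b vv f) v ↔
      (((v p : ZFSet) ∈ (v f : ZFSet) ∧ CtblIn Hs (v vv : ZFSet)) ∨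
       ((v vv : ZFSet) = ∅ ∧
        ¬ ∃ u : ZFSet, u ∈ Hs ∧ ZFSet.pair (v b : ZFSet) u ∈ (v f : ZFSet) ∧ CtblIn Hs u)) := by
  rw [branchF, rlz_sup, rlz_inf, rlz_inf, rlz_memF, rlz_ctblF tr, rlz_emptyF tr, rlz_not,
    rlz_exF]
  apply or_congr Iff.rfl
  apply and_congr Iff.rfl
  apply not_congr
  constructor
  · rintro ⟨u, hu⟩
    rw [rlz_exF] at hu
    obtain ⟨q, hq⟩ := hu
    rw [rlz_inf, rlz_inf, rlz_pairF tr, rlz_memF, rlz_ctblF tr] at hq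
    simp only [Option.elim] at hq
    exact ⟨u, memHs u, hq.1.1 ▸ hq.1.2, hq.2⟩
  · rintro ⟨u, huH, huf, huc⟩
    refine ⟨⟨u, huH⟩, ?_⟩
    rw [rlz_exF]
    refine ⟨⟨ZFSet.pair (v b : ZFSet) u, tr _ (memHs (v f)) huf⟩, ?_⟩
    rw [rlz_inf, rlz_inf, rlz_pairF tr, rlz_memF, rlz_ctblF tr]
    exact ⟨⟨rfl, huf⟩, huc⟩

/-- Semantic content of the body, with `Hs`-relativized quantifiers. -/
def BodySem (Hs f η : ZFSet.{0}) (n : ℕ) (p : ZFSet.{0}) : Prop :=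
  ∃ b v' : ZFSet, b ∈ Hs ∧ v' ∈ Hs ∧ p = ZFSet.pair b v' ∧ b ⊆ η ∧
    b.toSet.Finite ∧ b.toSet.ncard = n ∧
    ((p ∈ f ∧ CtblIn Hs v') ∨
     (v' = ∅ ∧ ¬ ∃ u : ZFSet, u ∈ Hs ∧ ZFSet.pair b u ∈ f ∧ CtblIn Hs u))

theorem rlz_PhiF (tr : Hs.IsTransitive)
    (hsub : ∀ c x : ZFSet, x ∈ Hs → c ⊆ x → c.toSet.Finite → c ∈ Hs)
    {n : ℕ} {y f η : α} :
    Rlz Hs r (PhiF n y f η) v ↔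
      ∀ p : ZFSet, p ∈ Hs →
        (p ∈ (v y : ZFSet) ↔ BodySem Hs (v f : ZFSet) (v η : ZFSet) n p) := by
  rw [PhiF, rlz_allF]
  constructor
  · intro h p hp
    have := h ⟨p, hp⟩
    rw [bodyF, rlz_iff, rlz_memF, rlz_exF] at this
    simp only [Option.elim] at this
    rw [this]
    constructor
    · rintro ⟨b, hb⟩
      rw [rlz_exF] at hb
      obtain ⟨v', hv'⟩ := hb
      rw [rlz_inf, rlz_inf, rlz_inf, rlz_pairF tr, rlz_subF tr,
        rlz_cardF tr hsub, rlz_branchF tr] at hv'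
      simp only [Option.elim] at hv'
      exact ⟨b, v', memHs b, memHs v', hv'.1.1.1, hv'.1.1.2, hv'.1.2.1, hv'.1.2.2, hv'.2⟩
    · rintro ⟨b, v', hbH, hv'H, hpp, hbsub, hbfin, hbcard, hbranch⟩
      refine ⟨⟨b, hbH⟩, ?_⟩
      rw [rlz_exF]
      refine ⟨⟨v', hv'H⟩, ?_⟩
      rw [rlz_inf, rlz_inf, rlz_inf, rlz_pairF tr, rlz_subF tr,
        rlz_cardF tr hsub, rlz_branchF tr]
      simp only [Option.elim]
      exact ⟨⟨⟨hpp, hbsub⟩, hbfin, hbcard⟩, hbranch⟩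
  · intro h m
    rw [bodyF, rlz_iff, rlz_memF, rlz_exF]
    simp only [Option.elim]
    rw [h (m : ZFSet) (memHs m)]
    constructor
    · rintro ⟨b, v', hbH, hv'H, hpp, hbsub, hbfin, hbcard, hbranch⟩
      refine ⟨⟨b, hbH⟩, ?_⟩
      rw [rlz_exF]
      refine ⟨⟨v', hv'H⟩, ?_⟩
      rw [rlz_inf, rlz_inf, rlz_inf, rlz_pairF tr, rlz_subF tr,
        rlz_cardF tr hsub, rlz_branchF tr]
      simp only [Option.elim]
      exact ⟨⟨⟨hpp, hbsub⟩, hbfin, hbcard⟩, hbranch⟩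
    · rintro ⟨b, hb⟩
      rw [rlz_exF] at hb
      obtain ⟨v', hv'⟩ := hb
      rw [rlz_inf, rlz_inf, rlz_inf, rlz_pairF tr, rlz_subF tr,
        rlz_cardF tr hsub, rlz_branchF tr] at hv'
      simp only [Option.elim] at hv'
      exact ⟨b, v', memHs b, memHs v', hv'.1.1.1, hv'.1.1.2, hv'.1.2.1, hv'.1.2.2, hv'.2⟩

end PhiSem


theorem stmt_1 (χ : Cardinal.{1}) (hχ : χ.IsRegular) (Hs : ZFSet) (hH : IsHCard χ Hs)
    (r : ZFSet → ZFSet → Prop) (hr : WOn Hs r) (w : ZFSet) (hw : IsOmega1 w)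
    (X η z : ZFSet) (hX : ElemSub Hs r X) (hXc : X.toSet.Countable)
    (hη : η ∈ X) (hηo : IsOrd η) (hz : z ⊆ η)
    (hD : ∀ a : ZFSet, a ⊆ z → a.toSet.Finite → a ∈ Dset w X η) :
    {x : ZFSet | x ∈ SkHull Hs η X z ∧ x ∈ w} = {x : ZFSet | x ∈ X ∧ x ∈ w} := by
  classical
  obtain ⟨hXM, hfm⟩ := hX
  have tr : Hs.IsTransitive := hcard_transitive hH
  have hsub : ∀ c x : ZFSet, x ∈ Hs → c ⊆ x → c.toSet.Finite → c ∈ Hs :=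
    fun c x hx hc hfin => hcard_subset hH hχ.aleph0_le hx hc hfin
  apply Set.ext
  intro x
  simp only [Set.mem_setOf_eq]
  constructor
  swap
  · rintro ⟨hxX, hxw⟩
    exact ⟨Or.inl ((ZFSet.mem_toSet _ _).2 hxX), hxw⟩
  rintro ⟨hxSk, hxw⟩
  refine ⟨?_, hxw⟩
  rcases hxSk with hxX | ⟨f, hfX, hfFun, a, haP, hazsub, hpair⟩
  · exact (ZFSet.mem_toSet _ _).1 hxX
  have hηX : η ∈ X.toSet := (ZFSet.mem_toSet _ _).2 hη
  have hfHs : f ∈ Hs := hXM ((ZFSet.mem_toSet _ _).1 hfX)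
  have hηHs : η ∈ Hs := hXM hη
  obtain ⟨hasub', hafin⟩ : a ⊆ η ∧ a.toSet.Finite := by
    have := ZFSet.mem_sep.1 haP
    exact ⟨ZFSet.mem_powerset.1 this.1, this.2⟩
  set n := a.toSet.ncard with hn
  set D := finPowCard η n with hDdef
  have hmemD : ∀ b : ZFSet, b ∈ D ↔ b ⊆ η ∧ b.toSet.Finite ∧ b.toSet.ncard = n := by
    intro b
    rw [hDdef, finPowCard, ZFSet.mem_sep, ZFSet.mem_powerset]
  have hxHs : x ∈ Hs := (mem_Hs_pair tr (tr _ hfHs hpair)).2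
  -- the corrected function F'
  set F' : ZFSet := ZFSet.sep (fun p => ∃ b v' : ZFSet, p = ZFSet.pair b v' ∧ b ∈ D ∧
      ((p ∈ f ∧ v' ∈ w) ∨ (v' = ∅ ∧ ∀ u : ZFSet, ZFSet.pair b u ∈ f → u ∉ w)))
    (f ∪ ZFSet.prod D {∅}) with hF'def
  have hmemF' : ∀ p : ZFSet, p ∈ F' ↔ ∃ b v' : ZFSet, p = ZFSet.pair b v' ∧ b ∈ D ∧
      ((p ∈ f ∧ v' ∈ w) ∨ (v' = ∅ ∧ ∀ u : ZFSet, ZFSet.pair b u ∈ f → u ∉ w)) := by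
    intro p
    rw [hF'def, ZFSet.mem_sep]
    constructor
    · rintro ⟨_, h⟩; exact h
    · rintro ⟨b, v', rfl, hbD, hbr⟩
      refine ⟨ZFSet.mem_union.2 ?_, b, v', rfl, hbD, hbr⟩
      rcases hbr with ⟨hpf, _⟩ | ⟨rfl, _⟩
      · exact Or.inl hpf
      · exact Or.inr (ZFSet.pair_mem_prod.2 ⟨hbD, ZFSet.mem_singleton.2 rfl⟩)
  obtain ⟨hfsub, hftot⟩ := hfFun
  have hDsubP : ∀ b : ZFSet, b ∈ D → b ∈ finPow η := by
    intro b hb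
    rw [finPow, ZFSet.mem_sep, ZFSet.mem_powerset]
    have := (hmemD b).1 hb
    exact ⟨this.1, this.2.1⟩
  -- F' is a function from D to w
  have hFunc : ZFSet.IsFunc D w F' := by
    constructor
    · intro p hp
      obtain ⟨b, v', rfl, hbD, hbr⟩ := (hmemF' p).1 hp
      apply ZFSet.pair_mem_prod.2
      refine ⟨hbD, ?_⟩
      rcases hbr with ⟨_, hvw⟩ | ⟨rfl, _⟩
      · exact hvw
      · exact empty_mem_omega1 hw
    · intro b hbD
      obtain ⟨v₀, hv₀, huniq⟩ := hftot b (hDsubP b hbD)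
      by_cases hv₀w : v₀ ∈ w
      · refine ⟨v₀, (hmemF' _).2 ⟨b, v₀, rfl, hbD, Or.inl ⟨hv₀, hv₀w⟩⟩, ?_⟩
        intro u hu
        obtain ⟨b', u', heq, hb'D, hbr⟩ := (hmemF' _).1 hu
        obtain ⟨hb1, hu1⟩ := ZFSet.pair_injective heq
        subst hb1
        subst hu1
        rcases hbr with ⟨hpf, _⟩ | ⟨rfl, hnall⟩
        · exact huniq _ hpf
        · exact absurd hv₀w (hnall v₀ hv₀)
      · refine ⟨∅, (hmemF' _).2 ⟨b, ∅, rfl, hbD, Or.inr ⟨rfl, ?_⟩⟩, ?_⟩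
        · intro u hu huw
          have hue : u = v₀ := huniq u hu
          exact hv₀w (hue ▸ huw)
        · intro u hu
          obtain ⟨b', u', heq, hb'D, hbr⟩ := (hmemF' _).1 hu
          obtain ⟨hb1, hu1⟩ := ZFSet.pair_injective heq
          subst hb1
          subst hu1
          rcases hbr with ⟨hpf, huw⟩ | ⟨h0, _⟩
          · have hue : u = v₀ := huniq u hpf
            exact absurd (hue ▸ huw) hv₀w
          · exact h0
  have haD : a ∈ D := (hmemD a).2 ⟨hasub', hafin, rfl⟩
  have hpairF' : ZFSet.pair a x ∈ F' := (hmemF' _).2 ⟨a, x, rfl, haD, Or.inl ⟨hpair, hxw⟩⟩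
  -- cardinality of D
  have hmkD : Cardinal.mk D.toSet < χ := by
    have hemb : ∀ b : D.toSet, ((Subtype.val ⁻¹' (b : ZFSet).toSet) : Set η.toSet).Finite := by
      intro b
      obtain ⟨hb1, hb2, _⟩ := (hmemD _).1 ((ZFSet.mem_toSet _ _).1 b.2)
      exact hb2.preimage (Subtype.val_injective.injOn)
    have hinj : Function.Injective (fun b : D.toSet => (hemb b).toFinset) := by
      intro b b' hbb
      have h1 := (hmemD _).1 ((ZFSet.mem_toSet _ _).1 b.2)
      have h2 := (hmemD _).1 ((ZFSet.mem_toSet _ _).1 b'.2)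
      have hbb' : (hemb b).toFinset = (hemb b').toFinset := hbb
      have hpre : (Subtype.val ⁻¹' ((b : ZFSet).toSet) : Set η.toSet)
          = Subtype.val ⁻¹' ((b' : ZFSet).toSet) := by
        rw [← Set.Finite.toFinset_inj (hs := hemb b) (ht := hemb b')]
        exact hbb'
      apply Subtype.ext
      apply ZFSet.ext
      intro t
      constructor
      · intro ht
        have htη : t ∈ η := h1.1 ht
        have : (⟨t, (ZFSet.mem_toSet _ _).2 htη⟩ : η.toSet) ∈
            (Subtype.val ⁻¹' ((b : ZFSet).toSet) : Set η.toSet) :=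
          (ZFSet.mem_toSet _ _).2 ht
        rw [hpre] at this
        exact (ZFSet.mem_toSet _ _).1 this
      · intro ht
        have htη : t ∈ η := h2.1 ht
        have : (⟨t, (ZFSet.mem_toSet _ _).2 htη⟩ : η.toSet) ∈
            (Subtype.val ⁻¹' ((b' : ZFSet).toSet) : Set η.toSet) :=
          (ZFSet.mem_toSet _ _).2 ht
        rw [← hpre] at this
        exact (ZFSet.mem_toSet _ _).1 this
    refine lt_of_le_of_lt (Cardinal.mk_le_of_injective hinj) ?_
    by_cases hηfin : η.toSet.Finite
    · haveI := hηfin.fintype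
      exact lt_of_lt_of_le (Cardinal.lt_aleph0_of_finite _) hχ.aleph0_le
    · haveI : Infinite η.toSet := Set.infinite_coe_iff.2 hηfin
      rw [Cardinal.mk_finset_of_infinite]
      exact herLt_card ((hH η).1 hηHs)
  have hprodcard : Cardinal.mk (ZFSet.prod D {∅}).toSet < χ := by
    have hdec : ∀ p : (ZFSet.prod D {∅}).toSet, ∃ b : ZFSet,
        b ∈ D ∧ (p : ZFSet) = ZFSet.pair b ∅ := by
      rintro ⟨p, hp⟩
      rw [ZFSet.mem_toSet, ZFSet.mem_prod] at hp
      obtain ⟨b, hb, e, he, rfl⟩ := hp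
      rw [ZFSet.mem_singleton] at he
      subst he
      exact ⟨b, hb, rfl⟩
    choose gb hgb using hdec
    have hinj : Function.Injective
        (fun p => (⟨gb p, (ZFSet.mem_toSet _ _).2 (hgb p).1⟩ : D.toSet)) := by
      intro p p' hpp
      apply Subtype.ext
      have hg : gb p = gb p' := congrArg Subtype.val hpp
      exact (hgb p).2.trans (by rw [hg, ← (hgb p').2])
    exact lt_of_le_of_lt (Cardinal.mk_le_of_injective hinj) hmkD
  have hF'Hs : F' ∈ Hs := by
    apply (hH F').2
    apply herLt_of
    · have hsubF : F'.toSet ⊆ f.toSet ∪ (ZFSet.prod D {∅}).toSet := by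
        intro p hp
        rw [ZFSet.mem_toSet] at hp
        obtain ⟨b, v', rfl, hbD, hbr⟩ := (hmemF' p).1 hp
        rcases hbr with ⟨hpf, _⟩ | ⟨rfl, _⟩
        · exact Or.inl ((ZFSet.mem_toSet _ _).2 hpf)
        · exact Or.inr ((ZFSet.mem_toSet _ _).2
            (ZFSet.pair_mem_prod.2 ⟨hbD, ZFSet.mem_singleton.2 rfl⟩))
      apply lt_of_le_of_lt (Cardinal.mk_le_mk_of_subset hsubF)
      apply lt_of_le_of_lt (Cardinal.mk_union_le _ _)
      exact Cardinal.add_lt_of_lt hχ.aleph0_le (herLt_card ((hH f).1 hfHs)) hprodcard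
    · intro p hp
      obtain ⟨b, v', rfl, hbD, hbr⟩ := (hmemF' p).1 hp
      obtain ⟨hb1, hb2, _⟩ := (hmemD b).1 hbD
      have hbHer : HerLt χ b := herLt_subset ((hH η).1 hηHs) hb1
        (lt_of_lt_of_le (Cardinal.lt_aleph0_iff_set_finite.2 hb2) hχ.aleph0_le)
      rcases hbr with ⟨hpf, _⟩ | ⟨rfl, _⟩
      · exact herLt_mem ((hH f).1 hfHs) hpf
      · exact herLt_kpair hχ.aleph0_le hbHer (herLt_empty hχ.aleph0_le)
  -- Body semantics match membership in F'
  have hBody : ∀ p : ZFSet, p ∈ Hs → (BodySem Hs f η n p ↔ p ∈ F') := by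
    intro p hpHs
    constructor
    · rintro ⟨b, v', hbH, hv'H, rfl, hbsub, hbfin, hbcard, hbr⟩
      apply (hmemF' _).2
      refine ⟨b, v', rfl, (hmemD b).2 ⟨hbsub, hbfin, hbcard⟩, ?_⟩
      rcases hbr with ⟨hpf, hct⟩ | ⟨h0, hnex⟩
      · exact Or.inl ⟨hpf, (ctblIn_iff_mem_omega1 hH hχ.aleph0_le hw hv'H).1 hct⟩
      · refine Or.inr ⟨h0, ?_⟩
        intro u huf huw
        have huH : u ∈ Hs := (mem_Hs_pair tr (tr _ hfHs huf)).2
        exact hnex ⟨u, huH, huf, (ctblIn_iff_mem_omega1 hH hχ.aleph0_le hw huH).2 huw⟩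
    · intro hp
      obtain ⟨b, v', rfl, hbD, hbr⟩ := (hmemF' _).1 hp
      have hbv'H := mem_Hs_pair tr hpHs
      obtain ⟨hbsub, hbfin, hbcard⟩ := (hmemD b).1 hbD
      refine ⟨b, v', hbv'H.1, hbv'H.2, rfl, hbsub, hbfin, hbcard, ?_⟩
      rcases hbr with ⟨hpf, hvw⟩ | ⟨h0, hall⟩
      · exact Or.inl ⟨hpf, (ctblIn_iff_mem_omega1 hH hχ.aleph0_le hw hbv'H.2).2 hvw⟩
      · refine Or.inr ⟨h0, ?_⟩
        rintro ⟨u, huH, huf, hct⟩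
        exact hall u huf ((ctblIn_iff_mem_omega1 hH hχ.aleph0_le hw huH).1 hct)
  -- transfer through the elementary submodel
  set v2 : Fin 2 → X.toSet :=
    fun i => Fin.cases (⟨f, hfX⟩ : X.toSet) (fun _ => (⟨η, hηX⟩ : X.toSet)) i with hv2
  have hv20 : ((v2 0 : X.toSet) : ZFSet) = f := rfl
  have hv21 : ((v2 1 : X.toSet) : ZFSet) = η := rfl
  set ψ : L.Formula (Option (Fin 2)) := PhiF n none (some 0) (some 1) with hψ
  set φ2 : L.Formula (Fin 2) := exF ψ with hφ2
  set vH : Fin 2 → Hs.toSet :=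
    fun i => (⟨((v2 i : X.toSet) : ZFSet), hXM (v2 i).2⟩ : Hs.toSet) with hvH
  have hHsreal : Rlz Hs r φ2 vH := by
    rw [hφ2, rlz_exF]
    refine ⟨⟨F', hF'Hs⟩, ?_⟩
    rw [hψ, rlz_PhiF tr hsub]
    intro p hp
    have h0 : (((fun o => o.elim (⟨F', hF'Hs⟩ : Hs.toSet) vH) (none : Option (Fin 2)) :
        Hs.toSet) : ZFSet) = F' := rfl
    have h1 : (((fun o => o.elim (⟨F', hF'Hs⟩ : Hs.toSet) vH) (some 0) : Hs.toSet) : ZFSet)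
        = f := rfl
    have h2 : (((fun o => o.elim (⟨F', hF'Hs⟩ : Hs.toSet) vH) (some 1) : Hs.toSet) : ZFSet)
        = η := rfl
    rw [h0, h1, h2]
    exact ((hBody p hp).symm)
  have hXreal : Rlz X r φ2 v2 := (hfm 2 φ2 v2).1 hHsreal
  obtain ⟨y₀X, hy₀⟩ := (rlz_exF (M := X) (r := r)).1 hXreal
  set g' : Option (Fin 2) → Fin 3 := fun o => o.elim 0 Fin.succ with hg'
  set φ3 : L.Formula (Fin 3) := ψ.relabel g' with hφ3
  set v3 : Fin 3 → X.toSet := fun j => Fin.cases y₀X v2 j with hv3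
  have hstep4X : Rlz X r φ3 v3 := by
    rw [hφ3]
    show (letI := mStruc X r; (ψ.relabel g').Realize v3)
    letI := mStruc X r
    rw [Formula.realize_relabel]
    have hvv : v3 ∘ g' = (fun o => o.elim y₀X v2) := by
      funext o
      cases o with
      | none => rfl
      | some i =>
        show v3 i.succ = v2 i
        rw [hv3]
        exact Fin.cases_succ _
    rw [hvv]
    exact hy₀
  have hback : Rlz Hs r φ3 (fun j => (⟨((v3 j : X.toSet) : ZFSet), hXM (v3 j).2⟩ : Hs.toSet)) :=
    (hfm 3 φ3 v3).2 hstep4X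
  have hsem : ∀ p : ZFSet, p ∈ Hs →
      (p ∈ ((y₀X : X.toSet) : ZFSet) ↔ BodySem Hs f η n p) := by
    have h := hback
    rw [hφ3] at h
    have h' : Rlz Hs r ψ ((fun j => (⟨((v3 j : X.toSet) : ZFSet), hXM (v3 j).2⟩ : Hs.toSet))
        ∘ g') := by
      rw [Rlz] at h ⊢
      rw [show (ψ.relabel g') = Formula.relabel g' ψ from rfl] at h
      exact (letI := mStruc Hs r; (Formula.realize_relabel).1 h)
    rw [hψ, rlz_PhiF tr hsub] at h'
    intro p hp
    have := h' p hp
    convert this using 2 <;> rfl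
  have hy₀F' : ((y₀X : X.toSet) : ZFSet) = F' := by
    apply ZFSet.ext
    intro t
    constructor
    · intro ht
      have htH : t ∈ Hs := tr _ (hXM y₀X.2) ht
      exact (hBody t htH).1 ((hsem t htH).1 ht)
    · intro ht
      have htH : t ∈ Hs := tr _ hF'Hs ht
      exact (hsem t htH).2 ((hBody t htH).2 ht)
  have hF'X : F' ∈ X.toSet := hy₀F' ▸ y₀X.2
  exact (hD a hazsub hafin).2 F' hF'X hFunc x hpairF'




end P746
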